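/- Let P be a Horn ℱ-program and M a model of P. Define the canonical computation X₀ = ∅ and Xₙ₊₁ = hset(P(Xₙ)) ∩ M. Then this sequence is a P-computation: Xₙ ⊆ Xₙ₊₁ and Xₙ₊₁ ∈ T^nd_P(Xₙ) for all n ≥ 0. -/
import Mathlib


/-- An abstract-constraint clause: head constraint `hdC` over head set `hset`,
positive body literals `pos` and negated body literals `neg`, each a pair
(constraint, atom set). -/
structure ACClause (At : Type*) where
  hdC : Set (Set At)
  hset : Set At
  pos : List (Set (Set At) × Set At)
  neg : List (Set (Set At) × Set At)

/-- M ⊨ C(X) iff M ∩ X ∈ C. -/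
def satAtom {At : Type*} (M : Set At) (A : Set (Set At) × Set At) : Prop :=
  M ∩ A.2 ∈ A.1

def satBody {At : Type*} (M : Set At) (r : ACClause At) : Prop :=
  (∀ A ∈ r.pos, satAtom M A) ∧ (∀ A ∈ r.neg, ¬ satAtom M A)

def satHead {At : Type*} (M : Set At) (r : ACClause At) : Prop :=
  M ∩ r.hset ∈ r.hdC

/-- A constraint is monotone (upward closed). -/
def MonoC {At : Type*} (C : Set (Set At)) : Prop :=
  ∀ A A' : Set At, A ∈ C → A ⊆ A' → A' ∈ C

def MonoClause {At : Type*} (r : ACClause At) : Prop :=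
  MonoC r.hdC ∧ (∀ A ∈ r.pos, MonoC A.1) ∧ (∀ A ∈ r.neg, MonoC A.1)

/-- All atom sets of a clause are finite. -/
def FinClause {At : Type*} (r : ACClause At) : Prop :=
  r.hset.Finite ∧ (∀ A ∈ r.pos, A.2.Finite) ∧ (∀ A ∈ r.neg, A.2.Finite)

/-- The head constraint atom of `r` is consistent. -/
def ConsHead {At : Type*} (r : ACClause At) : Prop :=
  ∃ M : Set At, satHead M r

def Models {At : Type*} (M : Set At) (P : Set (ACClause At)) : Prop :=
  ∀ r ∈ P, satBody M r → satHead M r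

/-- The M-applicable clauses P(M). -/
def appl {At : Type*} (P : Set (ACClause At)) (M : Set At) : Set (ACClause At) :=
  {r ∈ P | satBody M r}

/-- hset(P(M)): union of head sets of M-applicable clauses. -/
def hsetP {At : Type*} (P : Set (ACClause At)) (M : Set At) : Set At :=
  ⋃ r ∈ appl P M, r.hset

/-- The nondeterministic one-step provability operator. -/
def Tnd {At : Type*} (P : Set (ACClause At)) (M : Set At) : Set (Set At) :=
  {M' | M' ⊆ hsetP P M ∧ ∀ r ∈ appl P M, satHead M' r}

/-- A monotone ℱ-program: all constraints monotone, all atom sets finite. -/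
def MonoProg {At : Type*} (P : Set (ACClause At)) : Prop :=
  ∀ r ∈ P, MonoClause r ∧ FinClause r

/-- A Horn ℱ-program: monotone, finite atom sets, no negation. -/
def Horn {At : Type*} (P : Set (ACClause At)) : Prop :=
  ∀ r ∈ P, r.neg = [] ∧ MonoClause r ∧ FinClause r

/-- A P-computation. -/
def IsComputation {At : Type*} (P : Set (ACClause At)) (t : ℕ → Set At) : Prop :=
  t 0 = ∅ ∧ ∀ n, t n ⊆ t (n + 1) ∧ t (n + 1) ∈ Tnd P (t n)

/-- M is a derivable model of P: the result of some P-computation. -/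
def Derivable {At : Type*} (P : Set (ACClause At)) (M : Set At) : Prop :=
  ∃ t, IsComputation P t ∧ M = ⋃ n, t n

def stripNeg {At : Type*} (r : ACClause At) : ACClause At :=
  { r with neg := [] }

/-- The reduct P^M. -/
def reduct {At : Type*} (P : Set (ACClause At)) (M : Set At) : Set (ACClause At) :=
  {r' | ∃ r ∈ P, (∀ A ∈ r.neg, ¬ satAtom M A) ∧ r' = stripNeg r}

/-- M is a stable model of P: M is a derivable model of the reduct P^M. -/
def Stable {At : Type*} (P : Set (ACClause At)) (M : Set At) : Prop :=
  Derivable (reduct P M) M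

/-- The canonical P-computation with respect to M. -/
def canon {At : Type*} (P : Set (ACClause At)) (M : Set At) : ℕ → Set At
  | 0 => ∅
  | n + 1 => hsetP P (canon P M n) ∩ M

/-- A definite head: the head set is a minimal element of the head constraint. -/
def DefHead {At : Type*} (r : ACClause At) : Prop :=
  r.hset ∈ r.hdC ∧ ∀ Y ∈ r.hdC, Y ⊆ r.hset → Y = r.hset

lemma satBody_mono {At : Type*} {P : Set (ACClause At)} (hP : Horn P)
    {r : ACClause At} (hr : r ∈ P) {X Y : Set At} (hXY : X ⊆ Y)
    (h : satBody X r) : satBody Y r := by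
  obtain ⟨hneg, ⟨hmono, hposm, _⟩, _⟩ := hP r hr
  refine ⟨fun A hA => ?_, fun A hA => by simp [hneg] at hA⟩
  exact hposm A hA _ _ (h.1 A hA) (Set.inter_subset_inter_left _ hXY)

lemma appl_mono {At : Type*} {P : Set (ACClause At)} (hP : Horn P)
    {X Y : Set At} (hXY : X ⊆ Y) : appl P X ⊆ appl P Y :=
  fun r ⟨hr, hb⟩ => ⟨hr, satBody_mono hP hr hXY hb⟩

lemma hsetP_mono {At : Type*} {P : Set (ACClause At)} (hP : Horn P)
    {X Y : Set At} (hXY : X ⊆ Y) : hsetP P X ⊆ hsetP P Y := by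
  apply Set.biUnion_subset_biUnion_left (appl_mono hP hXY)

lemma canon_subset_M {At : Type*} (P : Set (ACClause At)) (M : Set At) :
    ∀ n, canon P M n ⊆ M
  | 0 => by simp [canon]
  | n + 1 => Set.inter_subset_right

theorem stmt6 {At : Type*} (P : Set (ACClause At)) (hP : Horn P)
    (M : Set At) (hM : Models M P) :
    IsComputation P (canon P M) := by
  have hmonoc : ∀ n, canon P M n ⊆ canon P M (n + 1) := by
    intro n
    induction n with
    | zero => simp [canon]
    | succ k ih =>
      show canon P M (k + 1) ⊆ hsetP P (canon P M (k + 1)) ∩ M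
      refine Set.subset_inter ?_ (canon_subset_M P M _)
      exact (Set.inter_subset_left).trans (hsetP_mono hP ih)
  refine ⟨rfl, fun n => ⟨hmonoc n, Set.inter_subset_left, ?_⟩⟩
  rintro r ⟨hrP, hrb⟩
  have hbM : satBody M r := satBody_mono hP hrP (canon_subset_M P M n) hrb
  have hHM : satHead M r := hM r hrP hbM
  have hsub : r.hset ⊆ hsetP P (canon P M n) :=
    Set.subset_biUnion_of_mem (u := ACClause.hset) ⟨hrP, hrb⟩
  have : M ∩ r.hset ⊆ canon P M (n + 1) ∩ r.hset := by
    intro x ⟨hxM, hxh⟩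
    exact ⟨⟨hsub hxh, hxM⟩, hxh⟩
  exact (hP r hrP).2.1.1 _ _ hHM this
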